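/- Fix a real number λ ≠ 0 and integers n, k ≥ 0. If n ≥ k, then (1/k!) Σ_{l=0}^{k} C(k,l) (−1)^{k−l} B_{n,λ}(l) = S^{(2)}_{J,λ}(n,k), while if 0 ≤ n < k, then (1/k!) Σ_{l=0}^{k} C(k,l) (−1)^{k−l} B_{n,λ}(l) = 0. Here C(k,l) is the ordinary binomial coefficient. -/

import Mathlib

open Finset

/-- The degenerate falling factorial `(x)_{n,λ} = x(x−λ)⋯(x−(n−1)λ)`;
for `lam = 1` it is the ordinary falling factorial `(x)_n`. -/
noncomputable def dff (lam : ℝ) (n : ℕ) (x : ℝ) : ℝ :=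
  ∏ i ∈ Finset.range n, (x - i * lam)

/-- The degenerate exponential `e_λ^x(t) = Σ_{n≥0} (x)_{n,λ} t^n/n!`. -/
noncomputable def degExp (lam x : ℝ) : PowerSeries ℝ :=
  PowerSeries.mk fun n => dff lam n x / n.factorial

/-- The degenerate logarithm `log_λ(1+t) = Σ_{n≥1} λ^{n−1}(1)_{n,1/λ} t^n/n!`. -/
noncomputable def degLog (lam : ℝ) : PowerSeries ℝ :=
  PowerSeries.mk fun n =>
    if n = 0 then 0 else lam ^ (n - 1) * dff (1 / lam) n 1 / n.factorial

/-- Composition `f(g(t))` of formal power series (valid definition of composition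
when `g` has zero constant term, as in all uses below). -/
noncomputable def pscomp (f g : PowerSeries ℝ) : PowerSeries ℝ :=
  PowerSeries.mk fun n =>
    ∑ k ∈ Finset.range (n + 1), (PowerSeries.coeff (R := ℝ) k f) * (PowerSeries.coeff (R := ℝ) n (g ^ k))

section Aux

lemma dff_smeval (lam : ℝ) (hlam : lam ≠ 0) (x : ℝ) (n : ℕ) :
    dff lam n x = lam ^ n * (descPochhammer ℤ n).smeval (x / lam) := by
  induction n with
  | zero => simp [dff]
  | succ n ih =>
    rw [dff, Finset.prod_range_succ, ← dff, ih, descPochhammer_succ_right,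
      Polynomial.smeval_mul, Polynomial.smeval_sub, Polynomial.smeval_X, Polynomial.smeval_natCast]
    field_simp
    ring

lemma dff_add (lam : ℝ) (hlam : lam ≠ 0) (k : ℕ) (x y : ℝ) :
    dff lam k (x + y) = ∑ ij ∈ antidiagonal k,
      (k.choose ij.1 : ℝ) * (dff lam ij.1 x * dff lam ij.2 y) := by
  rw [dff_smeval lam hlam, add_div, Ring.descPochhammer_smeval_add k (Commute.all _ _), mul_sum]
  refine sum_congr rfl fun ij hij => ?_
  rw [dff_smeval lam hlam, dff_smeval lam hlam]
  have h : ij.1 + ij.2 = k := Finset.HasAntidiagonal.mem_antidiagonal.mp hij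
  rw [← h, pow_add]
  ring

lemma degExp_add (lam : ℝ) (hlam : lam ≠ 0) (x y : ℝ) :
    degExp lam (x + y) = degExp lam x * degExp lam y := by
  ext n
  rw [PowerSeries.coeff_mul]
  simp only [degExp, PowerSeries.coeff_mk]
  rw [dff_add lam hlam, sum_div]
  refine sum_congr rfl fun ij hij => ?_
  have h : ij.1 + ij.2 = n := Finset.HasAntidiagonal.mem_antidiagonal.mp hij
  have hfact : (n.choose ij.1) * ij.1.factorial * ij.2.factorial = n.factorial := by
    have h0 := Nat.choose_mul_factorial_mul_factorial (n := n) (k := ij.1) (by omega)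
    have h2 : n - ij.1 = ij.2 := by omega
    rwa [h2] at h0
  have h1 : (ij.1.factorial : ℝ) ≠ 0 := Nat.cast_ne_zero.mpr ij.1.factorial_ne_zero
  have h2 : (ij.2.factorial : ℝ) ≠ 0 := Nat.cast_ne_zero.mpr ij.2.factorial_ne_zero
  have h3 : (n.factorial : ℝ) ≠ 0 := Nat.cast_ne_zero.mpr n.factorial_ne_zero
  field_simp
  rw [← hfact]
  push_cast
  ring

lemma degExp_zero (lam : ℝ) : degExp lam 0 = 1 := by
  ext n
  simp only [degExp, PowerSeries.coeff_mk, PowerSeries.coeff_one]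
  cases n with
  | zero => simp [dff]
  | succ n =>
    have : dff lam (n + 1) 0 = 0 := by
      apply Finset.prod_eq_zero (Finset.mem_range.mpr (Nat.succ_pos n))
      simp
    simp [this]

lemma degExp_nat (lam : ℝ) (hlam : lam ≠ 0) (l : ℕ) :
    degExp lam (l : ℝ) = (degExp lam 1) ^ l := by
  induction l with
  | zero => simpa using degExp_zero lam
  | succ l ih =>
    have h : ((l + 1 : ℕ) : ℝ) = (l : ℝ) + 1 := by push_cast; ring
    rw [h, degExp_add lam hlam, ih, pow_succ]

lemma coeff_pow_eq_zero {g : PowerSeries ℝ} (hg : PowerSeries.constantCoeff (R := ℝ) g = 0)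
    {n k : ℕ} (h : n < k) : PowerSeries.coeff (R := ℝ) n (g ^ k) = 0 := by
  have h1 : (PowerSeries.X : PowerSeries ℝ) ∣ g := PowerSeries.X_dvd_iff.mpr hg
  exact (PowerSeries.X_pow_dvd_iff.mp (pow_dvd_pow_of_dvd h1 k)) n h

lemma pscomp_coeff (f g : PowerSeries ℝ) (n : ℕ) :
    PowerSeries.coeff (R := ℝ) n (pscomp f g)
      = ∑ k ∈ Finset.range (n + 1), (PowerSeries.coeff (R := ℝ) k f) * (PowerSeries.coeff (R := ℝ) n (g ^ k)) := by
  simp [pscomp]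

lemma pscomp_coeff_ext {g : PowerSeries ℝ} (hg : PowerSeries.constantCoeff (R := ℝ) g = 0)
    (f : PowerSeries ℝ) {n N : ℕ} (h : n < N) :
    PowerSeries.coeff (R := ℝ) n (pscomp f g)
      = ∑ k ∈ Finset.range N, (PowerSeries.coeff (R := ℝ) k f) * (PowerSeries.coeff (R := ℝ) n (g ^ k)) := by
  rw [pscomp_coeff]
  apply Finset.sum_subset (Finset.range_subset_range.mpr h)
  intro k hk hk'
  simp only [Finset.mem_range] at hk hk'
  rw [coeff_pow_eq_zero hg (by omega), mul_zero]

lemma tri_sq (n : ℕ) (ψ : ℕ → ℕ → ℝ) (hψ : ∀ i j, n < i + j → ψ i j = 0) :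
    ∑ k ∈ Finset.range (n + 1), ∑ ij ∈ antidiagonal k, ψ ij.1 ij.2
      = ∑ i ∈ Finset.range (n + 1), ∑ j ∈ Finset.range (n + 1), ψ i j := by
  have h1 : ∀ k ∈ Finset.range (n + 1), ∑ ij ∈ antidiagonal k, ψ ij.1 ij.2
      = ∑ p ∈ Finset.range (n + 1) ×ˢ Finset.range (n + 1),
          if p.1 + p.2 = k then ψ p.1 p.2 else 0 := by
    intro k hk
    rw [← Finset.sum_filter]
    apply Finset.sum_congr _ fun _ _ => rfl
    ext p
    simp only [Finset.mem_filter, Finset.mem_product, Finset.mem_range,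
      Finset.HasAntidiagonal.mem_antidiagonal] at *
    omega
  rw [Finset.sum_congr rfl h1, Finset.sum_comm]
  conv_rhs => rw [← Finset.sum_product']
  apply Finset.sum_congr rfl
  intro p hp
  rw [Finset.sum_ite_eq (Finset.range (n + 1)) (p.1 + p.2)]
  split_ifs with h
  · rfl
  · exact (hψ p.1 p.2 (by simp only [Finset.mem_range] at h; omega)).symm

lemma pscomp_mul {g : PowerSeries ℝ} (hg : PowerSeries.constantCoeff (R := ℝ) g = 0)
    (f₁ f₂ : PowerSeries ℝ) : pscomp (f₁ * f₂) g = pscomp f₁ g * pscomp f₂ g := by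
  ext n
  rw [PowerSeries.coeff_mul]
  have hR : ∀ ab ∈ antidiagonal n,
      PowerSeries.coeff (R := ℝ) ab.1 (pscomp f₁ g) * PowerSeries.coeff (R := ℝ) ab.2 (pscomp f₂ g)
      = ∑ i ∈ Finset.range (n + 1), ∑ j ∈ Finset.range (n + 1),
          (PowerSeries.coeff (R := ℝ) i f₁ * PowerSeries.coeff (R := ℝ) j f₂)
            * (PowerSeries.coeff (R := ℝ) ab.1 (g ^ i) * PowerSeries.coeff (R := ℝ) ab.2 (g ^ j)) := by
    intro ab hab
    have hm : ab.1 + ab.2 = n := Finset.HasAntidiagonal.mem_antidiagonal.mp hab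
    rw [pscomp_coeff_ext hg f₁ (show ab.1 < n + 1 by omega),
      pscomp_coeff_ext hg f₂ (show ab.2 < n + 1 by omega), Finset.sum_mul_sum]
    refine Finset.sum_congr rfl fun i _ => Finset.sum_congr rfl fun j _ => by ring
  rw [Finset.sum_congr rfl hR, Finset.sum_comm]
  have hswap : ∀ i ∈ Finset.range (n + 1),
      (∑ ab ∈ antidiagonal n, ∑ j ∈ Finset.range (n + 1),
        (PowerSeries.coeff (R := ℝ) i f₁ * PowerSeries.coeff (R := ℝ) j f₂)
          * (PowerSeries.coeff (R := ℝ) ab.1 (g ^ i) * PowerSeries.coeff (R := ℝ) ab.2 (g ^ j)))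
      = ∑ j ∈ Finset.range (n + 1),
        (PowerSeries.coeff (R := ℝ) i f₁ * PowerSeries.coeff (R := ℝ) j f₂)
          * PowerSeries.coeff (R := ℝ) n (g ^ (i + j)) := by
    intro i _
    rw [Finset.sum_comm]
    refine Finset.sum_congr rfl fun j _ => ?_
    rw [pow_add, PowerSeries.coeff_mul, Finset.mul_sum]
  rw [Finset.sum_congr rfl hswap]
  rw [pscomp_coeff]
  have hL : ∀ k ∈ Finset.range (n + 1),
      PowerSeries.coeff (R := ℝ) k (f₁ * f₂) * PowerSeries.coeff (R := ℝ) n (g ^ k)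
      = ∑ ij ∈ antidiagonal k,
          (PowerSeries.coeff (R := ℝ) ij.1 f₁ * PowerSeries.coeff (R := ℝ) ij.2 f₂)
            * PowerSeries.coeff (R := ℝ) n (g ^ (ij.1 + ij.2)) := by
    intro k _
    rw [PowerSeries.coeff_mul, Finset.sum_mul]
    refine Finset.sum_congr rfl fun ij hij => ?_
    rw [Finset.HasAntidiagonal.mem_antidiagonal.mp hij]
  rw [Finset.sum_congr rfl hL]
  exact tri_sq n (fun i j => (PowerSeries.coeff (R := ℝ) i f₁ * PowerSeries.coeff (R := ℝ) j f₂)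
    * PowerSeries.coeff (R := ℝ) n (g ^ (i + j)))
    (fun i j h => by
      show PowerSeries.coeff (R := ℝ) i f₁ * PowerSeries.coeff (R := ℝ) j f₂
        * PowerSeries.coeff (R := ℝ) n (g ^ (i + j)) = 0
      rw [coeff_pow_eq_zero hg h, mul_zero])

lemma pscomp_one (g : PowerSeries ℝ) : pscomp 1 g = 1 := by
  ext n
  rw [pscomp_coeff]
  simp only [PowerSeries.coeff_one, ite_mul, zero_mul, one_mul]
  rw [Finset.sum_ite_eq' (Finset.range (n + 1)) 0 (fun k => PowerSeries.coeff (R := ℝ) n (g ^ k))]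
  simp [PowerSeries.coeff_one]

lemma pscomp_C (g : PowerSeries ℝ) (a : ℝ) : pscomp (PowerSeries.C (R := ℝ) a) g = PowerSeries.C (R := ℝ) a := by
  ext n
  rw [pscomp_coeff]
  simp only [PowerSeries.coeff_C, ite_mul, zero_mul]
  rw [Finset.sum_ite_eq' (Finset.range (n + 1)) 0 (fun k => a * PowerSeries.coeff (R := ℝ) n (g ^ k))]
  simp [PowerSeries.coeff_C]

lemma pscomp_pow {g : PowerSeries ℝ} (hg : PowerSeries.constantCoeff (R := ℝ) g = 0)
    (f : PowerSeries ℝ) (m : ℕ) : pscomp (f ^ m) g = (pscomp f g) ^ m := by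
  induction m with
  | zero => simpa using pscomp_one g
  | succ m ih => rw [pow_succ, pscomp_mul hg, ih, pow_succ]

lemma pscomp_add (f₁ f₂ g : PowerSeries ℝ) :
    pscomp (f₁ + f₂) g = pscomp f₁ g + pscomp f₂ g := by
  ext n
  rw [map_add, pscomp_coeff, pscomp_coeff, pscomp_coeff, ← Finset.sum_add_distrib]
  refine Finset.sum_congr rfl fun k _ => ?_
  rw [map_add, add_mul]

lemma pscomp_sum {ι : Type*} (s : Finset ι) (F : ι → PowerSeries ℝ) (g : PowerSeries ℝ) :
    pscomp (∑ i ∈ s, F i) g = ∑ i ∈ s, pscomp (F i) g := by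
  induction s using Finset.cons_induction with
  | empty =>
    ext n
    simp [pscomp_coeff]
  | cons a s ha ih =>
    rw [Finset.sum_cons, Finset.sum_cons, pscomp_add, ih]

end Aux

theorem jindalrae_stirling2_alternating_sum (lam : ℝ) (hlam : lam ≠ 0)
    (B : ℕ → ℝ → ℝ) (SJ2 : ℕ → ℕ → ℝ)
    (hB : ∀ x : ℝ, pscomp (degExp lam x) (degExp lam 1 - 1) = PowerSeries.mk (fun n => B n x / n.factorial))
    (hSJ2 : ∀ k : ℕ, (PowerSeries.C (R := ℝ) ((k.factorial : ℝ))⁻¹) * (pscomp (degExp lam 1) (degExp lam 1 - 1) - 1) ^ k = PowerSeries.mk (fun n => if k ≤ n then SJ2 n k / n.factorial else 0))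
    : ∀ n k : ℕ, (k ≤ n → ((k.factorial : ℝ))⁻¹ * ∑ l ∈ Finset.range (k + 1), (k.choose l : ℝ) * (-1 : ℝ) ^ (k - l) * B n (l : ℝ) = SJ2 n k) ∧ (n < k → ((k.factorial : ℝ))⁻¹ * ∑ l ∈ Finset.range (k + 1), (k.choose l : ℝ) * (-1 : ℝ) ^ (k - l) * B n (l : ℝ) = 0) := by
  intro n k
  set g : PowerSeries ℝ := degExp lam 1 - 1 with hgdef
  have hg : PowerSeries.constantCoeff (R := ℝ) g = 0 := by
    rw [hgdef, map_sub, map_one]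
    have : PowerSeries.constantCoeff (R := ℝ) (degExp lam 1) = dff lam 0 1 / Nat.factorial 0 :=
      PowerSeries.constantCoeff_mk
    rw [this]
    simp [dff]
  have h1 : degExp lam 1 = g + 1 := by rw [hgdef]; ring
  -- binomial expansion of g ^ k
  have hgk : g ^ k = ∑ l ∈ Finset.range (k + 1),
      (g + 1) ^ l * PowerSeries.C (R := ℝ) ((-1 : ℝ) ^ (k - l) * (k.choose l : ℝ)) := by
    have hb : g = (g + 1) + (-1) := by ring
    calc g ^ k = ((g + 1) + (-1)) ^ k := by rw [← hb]
      _ = ∑ l ∈ Finset.range (k + 1), (g + 1) ^ l * (-1) ^ (k - l) * (k.choose l : PowerSeries ℝ) :=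
          add_pow _ _ _
      _ = _ := by
          refine Finset.sum_congr rfl fun l _ => ?_
          rw [mul_assoc]
          congr 1
          rw [map_mul, map_pow, map_neg, map_one, map_natCast]
  -- the power series identity
  have hser : (pscomp (degExp lam 1) g - 1) ^ k
      = ∑ l ∈ Finset.range (k + 1),
          PowerSeries.mk (fun m => B m (l : ℝ) / m.factorial)
            * PowerSeries.C (R := ℝ) ((-1 : ℝ) ^ (k - l) * (k.choose l : ℝ)) := by
    have hF : pscomp (degExp lam 1) g - 1 = pscomp g g := by
      rw [h1, pscomp_add, pscomp_one]
      ring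
    rw [hF, ← pscomp_pow hg, hgk, pscomp_sum]
    refine Finset.sum_congr rfl fun l _ => ?_
    rw [pscomp_mul hg, pscomp_C, ← h1, ← degExp_nat lam hlam, hB]
  -- extract coefficient n
  have hs := congrArg (PowerSeries.coeff (R := ℝ) n) (hSJ2 k)
  rw [hgdef] at hs  -- make sure g matches  (no-op if set handled it)
  rw [PowerSeries.coeff_C_mul, PowerSeries.coeff_mk] at hs
  rw [show pscomp (degExp lam 1) (degExp lam 1 - 1) = pscomp (degExp lam 1) g from rfl] at hs
  rw [hser, map_sum] at hs
  have hco : ∀ l ∈ Finset.range (k + 1),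
      PowerSeries.coeff (R := ℝ) n (PowerSeries.mk (fun m => B m (l : ℝ) / m.factorial)
        * PowerSeries.C (R := ℝ) ((-1 : ℝ) ^ (k - l) * (k.choose l : ℝ)))
      = (k.choose l : ℝ) * (-1 : ℝ) ^ (k - l) * B n (l : ℝ) / n.factorial := by
    intro l _
    rw [PowerSeries.coeff_mul_C, PowerSeries.coeff_mk]
    ring
  rw [Finset.sum_congr rfl hco, ← Finset.sum_div] at hs
  have hn : (n.factorial : ℝ) ≠ 0 := Nat.cast_ne_zero.mpr n.factorial_ne_zero
  constructor
  · intro hkn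
    rw [if_pos hkn] at hs
    calc ((k.factorial : ℝ))⁻¹ * ∑ l ∈ Finset.range (k + 1),
        (k.choose l : ℝ) * (-1 : ℝ) ^ (k - l) * B n (l : ℝ)
        = ((k.factorial : ℝ))⁻¹ * ((∑ l ∈ Finset.range (k + 1),
            (k.choose l : ℝ) * (-1 : ℝ) ^ (k - l) * B n (l : ℝ)) / n.factorial) * n.factorial := by
          field_simp
      _ = SJ2 n k := by rw [hs, div_mul_cancel₀ _ hn]
  · intro hnk
    rw [if_neg (by omega)] at hs
    calc ((k.factorial : ℝ))⁻¹ * ∑ l ∈ Finset.range (k + 1),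
        (k.choose l : ℝ) * (-1 : ℝ) ^ (k - l) * B n (l : ℝ)
        = ((k.factorial : ℝ))⁻¹ * ((∑ l ∈ Finset.range (k + 1),
            (k.choose l : ℝ) * (-1 : ℝ) ^ (k - l) * B n (l : ℝ)) / n.factorial) * n.factorial := by
          field_simp
      _ = 0 := by rw [hs, zero_mul]
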